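/- For any I > 0, the function h(l) = 2 l² Φ(−l√I/2) on [0,∞) satisfies h(0) = 0, h(l) → 0 as l → ∞, h(l) > 0 for l > 0, and h has a unique critical point l̂ ∈ (0,∞), which is its global maximum; at l̂ the acceptance rate a(l̂) = 2Φ(−l̂√I/2) satisfies the first-order condition 2 a(l̂) = l̂ √I φ(l̂√I/2), where φ is the standard normal density. -/

import Mathlib

open Real Set Filter MeasureTheory ProbabilityTheory

/-- Standard normal cumulative distribution function. -/
noncomputable def Phi (x : ℝ) : ℝ := ∫ t in Set.Iic x, Real.exp (-t^2/2) / Real.sqrt (2*Real.pi)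

noncomputable def gpdf (t : ℝ) : ℝ := Real.exp (-t^2/2) / Real.sqrt (2*Real.pi)

lemma gpdf_pos (t : ℝ) : 0 < gpdf t :=
  div_pos (Real.exp_pos _) (Real.sqrt_pos.mpr (by positivity))

lemma gpdf_even (t : ℝ) : gpdf (-t) = gpdf t := by simp [gpdf, neg_sq]

lemma continuous_gpdf : Continuous gpdf := by
  unfold gpdf; fun_prop

lemma integrable_gpdf : Integrable gpdf := by
  have h := (integrable_exp_neg_mul_sq (by norm_num : (0:ℝ) < 1/2)).div_const (Real.sqrt (2*Real.pi))
  convert h using 2 with t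
  unfold gpdf
  rw [mul_comm 2 Real.pi, div_eq_mul_inv]
  congr 1
  ring_nf

lemma Phi_eq (x : ℝ) : Phi x = ∫ t in Set.Iic x, gpdf t := rfl

lemma hasDerivAt_Phi (x : ℝ) : HasDerivAt Phi (gpdf x) x := by
  have key : ∀ y : ℝ, Phi y = Phi 0 + ∫ t in (0:ℝ)..y, gpdf t := by
    intro y
    have := intervalIntegral.integral_Iic_sub_Iic (integrable_gpdf.integrableOn (s := Set.Iic 0))
      (integrable_gpdf.integrableOn (s := Set.Iic y)) (μ := volume)
    rw [Phi_eq, Phi_eq]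
    linarith [this]
  have hd : HasDerivAt (fun u => ∫ t in (0:ℝ)..u, gpdf t) (gpdf x) x :=
    intervalIntegral.integral_hasDerivAt_right integrable_gpdf.intervalIntegrable
      (continuous_gpdf.aestronglyMeasurable.stronglyMeasurableAtFilter)
      continuous_gpdf.continuousAt
  have h2 := hd.const_add (Phi 0)
  have : (fun y => Phi 0 + ∫ t in (0:ℝ)..y, gpdf t) = Phi := funext fun y => (key y).symm
  rwa [this] at h2

lemma Phi_pos (x : ℝ) : 0 < Phi x := by
  rw [Phi_eq]
  rw [setIntegral_pos_iff_support_of_nonneg_ae]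
  · have : Function.support gpdf = Set.univ :=
      Set.eq_univ_iff_forall.mpr fun t => (gpdf_pos t).ne'
    rw [this, Set.univ_inter, Real.volume_Iic]
    simp
  · exact Filter.Eventually.of_forall fun t => (gpdf_pos t).le
  · exact integrable_gpdf.integrableOn

lemma integral_gpdf : ∫ t, gpdf t = 1 := by
  have h1 : ∫ t : ℝ, Real.exp (-(1/2) * t^2) = Real.sqrt (Real.pi / (1/2)) :=
    integral_gaussian (1/2)
  have h2 : (fun t : ℝ => gpdf t) = fun t => Real.exp (-(1/2) * t^2) / Real.sqrt (2*Real.pi) := by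
    funext t; unfold gpdf; congr 1; ring_nf
  have h3 : Real.pi / (1/2) = 2 * Real.pi := by ring
  rw [show (∫ t, gpdf t) = ∫ t : ℝ, Real.exp (-(1/2) * t^2) / Real.sqrt (2*Real.pi) from by
    rw [← h2], integral_div, h1, h3, div_self]
  positivity

lemma Phi_zero : Phi 0 = 1/2 := by
  have hsymm : ∫ t in Set.Iic (0:ℝ), gpdf t = ∫ t in Set.Ioi (0:ℝ), gpdf t := by
    have := integral_comp_neg_Iic (0:ℝ) gpdf
    simp only [gpdf_even, neg_zero] at this
    exact this
  have hsum := intervalIntegral.integral_Iic_add_Ioi (b := (0:ℝ))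
    integrable_gpdf.integrableOn integrable_gpdf.integrableOn
  rw [integral_gpdf] at hsum
  rw [Phi_eq]
  linarith

lemma integrable_g4 : Integrable (fun t : ℝ => Real.exp (-t^2/4)) := by
  have h := integrable_exp_neg_mul_sq (by norm_num : (0:ℝ) < 1/4)
  convert h using 2 with t
  ring_nf

lemma Phi_le {y : ℝ} (hy : 0 ≤ y) :
    Phi (-y) ≤ Real.sqrt (4*Real.pi) / Real.sqrt (2*Real.pi) * Real.exp (-y^2/4) := by
  have hsq : (0:ℝ) < Real.sqrt (2*Real.pi) := Real.sqrt_pos.mpr (by positivity)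
  have hint : Integrable (fun t : ℝ => Real.exp (-y^2/4) * Real.exp (-t^2/4) / Real.sqrt (2*Real.pi)) := by
    have := (integrable_g4.const_mul (Real.exp (-y^2/4))).div_const (Real.sqrt (2*Real.pi))
    exact this
  have step1 : Phi (-y) ≤ ∫ t in Set.Iic (-y),
      Real.exp (-y^2/4) * Real.exp (-t^2/4) / Real.sqrt (2*Real.pi) := by
    rw [Phi_eq]
    apply setIntegral_mono_on integrable_gpdf.integrableOn hint.integrableOn measurableSet_Iic
    intro t ht
    simp only [Set.mem_Iic] at ht
    unfold gpdf
    gcongr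
    rw [← Real.exp_add]
    apply Real.exp_le_exp.mpr
    nlinarith
  have step2 : (∫ t in Set.Iic (-y),
      Real.exp (-y^2/4) * Real.exp (-t^2/4) / Real.sqrt (2*Real.pi))
      ≤ ∫ t, Real.exp (-y^2/4) * Real.exp (-t^2/4) / Real.sqrt (2*Real.pi) := by
    apply setIntegral_le_integral hint
    exact Filter.Eventually.of_forall fun t => by positivity
  have step3 : (∫ t : ℝ, Real.exp (-y^2/4) * Real.exp (-t^2/4) / Real.sqrt (2*Real.pi))
      = Real.sqrt (4*Real.pi) / Real.sqrt (2*Real.pi) * Real.exp (-y^2/4) := by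
    have h4 : ∫ t : ℝ, Real.exp (-(1/4) * t^2) = Real.sqrt (Real.pi / (1/4)) :=
      integral_gaussian (1/4)
    have he : (fun t : ℝ => Real.exp (-y^2/4) * Real.exp (-t^2/4) / Real.sqrt (2*Real.pi))
        = fun t : ℝ => (Real.exp (-y^2/4) / Real.sqrt (2*Real.pi)) * Real.exp (-(1/4) * t^2) := by
      funext t
      rw [show -(1/4 : ℝ) * t^2 = -t^2/4 by ring]
      ring
    rw [he, integral_const_mul, h4, show Real.pi / (1/4) = 4*Real.pi by ring]
    ring
  linarith

lemma tendsto_pow_mul_exp_neg_sq {b : ℝ} (hb : 0 < b) (n : ℕ) :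
    Tendsto (fun l : ℝ => l^n * Real.exp (-(b*l^2))) atTop (nhds 0) := by
  have h1 : Tendsto (fun l : ℝ => (b*l)^n * Real.exp (-(b*l))) atTop (nhds 0) :=
    (tendsto_pow_mul_exp_neg_atTop_nhds_zero n).comp (tendsto_id.const_mul_atTop hb)
  have h2 := h1.const_mul ((b:ℝ)^n)⁻¹
  rw [mul_zero] at h2
  have h3 : Tendsto (fun l : ℝ => l^n * Real.exp (-(b*l))) atTop (nhds 0) := by
    refine h2.congr fun l => ?_
    rw [mul_pow]
    field_simp
  apply squeeze_zero' (g := fun l : ℝ => l^n * Real.exp (-(b*l)))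
  · filter_upwards [eventually_ge_atTop (0:ℝ)] with l hl
    positivity
  · filter_upwards [eventually_ge_atTop (1:ℝ)] with l hl
    have : -(b*l^2) ≤ -(b*l) := by nlinarith [mul_le_mul_of_nonneg_left (by nlinarith : l ≤ l^2) hb.le]
    have hle := Real.exp_le_exp.mpr this
    have : (0:ℝ) ≤ l^n := by positivity
    nlinarith [Real.exp_pos (-(b*l^2))]
  · exact h3

lemma hasDerivAt_gpdf (x : ℝ) : HasDerivAt gpdf (-x * gpdf x) x := by
  have h1 : HasDerivAt (fun t : ℝ => -t^2/2) (-x) x := by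
    have := ((hasDerivAt_pow 2 x).neg).div_const 2
    refine this.congr_deriv ?_
    simp
    ring_nf
  have h2 := (h1.exp).div_const (Real.sqrt (2*Real.pi))
  refine h2.congr_deriv ?_
  unfold gpdf
  ring

noncomputable def gfun (c l : ℝ) : ℝ := 2 * Phi (-(l*c)/2) - c/2 * l * gpdf (l*c/2)

lemma hasDerivAt_PhiComp (c l : ℝ) :
    HasDerivAt (fun l : ℝ => Phi (-(l*c)/2)) (gpdf (l*c/2) * (-(c/2))) l := by
  have hin : HasDerivAt (fun l : ℝ => -(l*c)/2) (-(c/2)) l := by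
    have := (((hasDerivAt_id l).mul_const c).neg).div_const 2
    refine this.congr_deriv ?_
    ring
  have := (hasDerivAt_Phi (-(l*c)/2)).comp l hin
  have he : gpdf (-(l*c)/2) = gpdf (l*c/2) := by
    rw [show -(l*c)/2 = -(l*c/2) by ring, gpdf_even]
  rwa [he] at this

lemma hasDerivAt_gpdfComp (c l : ℝ) :
    HasDerivAt (fun l : ℝ => gpdf (l*c/2)) (-(l*c/2) * gpdf (l*c/2) * (c/2)) l := by
  have hin : HasDerivAt (fun l : ℝ => l*c/2) (c/2) l := by
    have := ((hasDerivAt_id l).mul_const c).div_const 2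
    refine this.congr_deriv ?_
    ring
  exact (hasDerivAt_gpdf (l*c/2)).comp l hin

lemma hasDerivAt_gfun (c l : ℝ) :
    HasDerivAt (gfun c) (c/2 * gpdf (l*c/2) * ((c/2)^2*l^2 - 3)) l := by
  have hA := (hasDerivAt_PhiComp c l).const_mul 2
  have hB := ((hasDerivAt_id l).const_mul (c/2)).mul (hasDerivAt_gpdfComp c l)
  have := hA.sub hB
  simp only [id_eq] at this
  refine this.congr_deriv ?_
  ring

lemma hasDerivAt_hfun (c l : ℝ) :
    HasDerivAt (fun l : ℝ => 2 * l^2 * Phi (-(l*c)/2)) (2 * l * gfun c l) l := by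
  have hA := ((hasDerivAt_pow 2 l).const_mul 2).mul (hasDerivAt_PhiComp c l)
  refine hA.congr_deriv ?_
  unfold gfun
  ring


theorem stmt19 (I : ℝ) (hI : 0 < I) :
    let h : ℝ → ℝ := fun l => 2 * l^2 * Phi (-(l * Real.sqrt I) / 2)
    h 0 = 0 ∧
    Tendsto h atTop (nhds 0) ∧
    (∀ l : ℝ, 0 < l → 0 < h l) ∧
    ∃ lhat : ℝ, 0 < lhat ∧ deriv h lhat = 0 ∧
      (∀ l : ℝ, 0 < l → deriv h l = 0 → l = lhat) ∧
      IsMaxOn h (Set.Ici 0) lhat ∧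
      2 * (2 * Phi (-(lhat * Real.sqrt I) / 2))
        = lhat * Real.sqrt I *
          (Real.exp (-(lhat * Real.sqrt I / 2)^2 / 2) / Real.sqrt (2*Real.pi)) := by
  intro h
  have hdef : h = fun l => 2 * l^2 * Phi (-(l * Real.sqrt I) / 2) := rfl
  have hc : 0 < Real.sqrt I := Real.sqrt_pos.mpr hI
  set c := Real.sqrt I with hcdef
  set K := Real.sqrt (4*Real.pi) / Real.sqrt (2*Real.pi) with hKdef
  have hK : 0 < K := by rw [hKdef]; positivity
  refine ⟨by rw [hdef]; norm_num, ?_, ?_, ?_⟩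
  · -- tendsto 0
    rw [hdef]
    have hb16 : (0:ℝ) < c^2/16 := by positivity
    apply squeeze_zero' (g := fun l : ℝ => (2*K) * (l^2 * Real.exp (-(c^2/16 * l^2))))
    · filter_upwards with l
      exact mul_nonneg (by positivity) (Phi_pos _).le
    · filter_upwards [eventually_ge_atTop (0:ℝ)] with l hl
      have hy : 0 ≤ l*c/2 := by positivity
      have hb := Phi_le hy
      rw [show -(l * c) / 2 = -(l*c/2) by ring]
      calc 2 * l^2 * Phi (-(l*c/2)) ≤ 2 * l^2 * (K * Real.exp (-(l*c/2)^2/4)) := by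
            apply mul_le_mul_of_nonneg_left hb (by positivity)
        _ = (2*K) * (l^2 * Real.exp (-(c^2/16 * l^2))) := by
            rw [show -(l*c/2)^2/4 = -(c^2/16 * l^2) by ring]; ring
    · have := (tendsto_pow_mul_exp_neg_sq hb16 2).const_mul (2*K)
      simpa using this
  · -- positivity
    intro l hl
    rw [hdef]
    exact mul_pos (by positivity) (Phi_pos _)
  -- main part
  have h12 : (Real.sqrt 12)^2 = 12 := Real.sq_sqrt (by norm_num)
  have h12p : (0:ℝ) < Real.sqrt 12 := Real.sqrt_pos.mpr (by norm_num)
  set s := Real.sqrt 12 / c with hsdef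
  have hs : 0 < s := by positivity
  have hderivg : ∀ l, deriv (gfun c) l = c/2 * gpdf (l*c/2) * ((c/2)^2*l^2 - 3) :=
    fun l => (hasDerivAt_gfun c l).deriv
  have hgdiff : Differentiable ℝ (gfun c) := fun l => (hasDerivAt_gfun c l).differentiableAt
  have hgcont : Continuous (gfun c) := hgdiff.continuous
  have hanti : StrictAntiOn (gfun c) (Set.Icc 0 s) := by
    apply strictAntiOn_of_deriv_neg (convex_Icc 0 s) hgcont.continuousOn
    intro x hx
    rw [interior_Icc] at hx
    obtain ⟨hx0, hxs⟩ := hx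
    rw [hderivg]
    have hxc : x*c < Real.sqrt 12 := by
      rw [hsdef, lt_div_iff₀ hc] at hxs; exact hxs
    have hxc2 : (x*c)^2 < 12 := by nlinarith [mul_nonneg hx0.le hc.le]
    apply mul_neg_of_pos_of_neg (mul_pos (by positivity) (gpdf_pos _))
    nlinarith
  have hmono : StrictMonoOn (gfun c) (Set.Ici s) := by
    apply strictMonoOn_of_deriv_pos (convex_Ici s) hgcont.continuousOn
    intro x hx
    rw [interior_Ici] at hx
    rw [hderivg]
    have hx' : Real.sqrt 12 / c < x := hx
    have hxc : Real.sqrt 12 < x*c := by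
      rw [div_lt_iff₀ hc] at hx'; linarith [hx']
    have hxc2 : 12 < (x*c)^2 := by nlinarith [h12p.le]
    exact mul_pos (mul_pos (by positivity) (gpdf_pos _)) (by nlinarith)
  have gtends : Tendsto (gfun c) atTop (nhds 0) := by
    have hb16 : (0:ℝ) < c^2/16 := by positivity
    have hb8 : (0:ℝ) < c^2/8 := by positivity
    have t1 : Tendsto (fun l : ℝ => 2 * Phi (-(l*c)/2)) atTop (nhds 0) := by
      apply squeeze_zero' (g := fun l : ℝ => (2*K) * Real.exp (-(c^2/16 * l^2)))
      · filter_upwards with l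
        linarith [Phi_pos (-(l*c)/2)]
      · filter_upwards [eventually_ge_atTop (0:ℝ)] with l hl
        have hy : 0 ≤ l*c/2 := by positivity
        have hb := Phi_le hy
        rw [show -(l * c) / 2 = -(l*c/2) by ring]
        calc 2 * Phi (-(l*c/2)) ≤ 2 * (K * Real.exp (-(l*c/2)^2/4)) := by linarith
          _ = (2*K) * Real.exp (-(c^2/16 * l^2)) := by
              rw [show -(l*c/2)^2/4 = -(c^2/16 * l^2) by ring]; ring
      · have := (tendsto_pow_mul_exp_neg_sq hb16 0).const_mul (2*K)
        simpa using this
    have t2 : Tendsto (fun l : ℝ => c/2 * l * gpdf (l*c/2)) atTop (nhds 0) := by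
      have heq : ∀ l : ℝ, c/2 * l * gpdf (l*c/2)
          = (c/2/Real.sqrt (2*Real.pi)) * (l^1 * Real.exp (-(c^2/8 * l^2))) := by
        intro l
        unfold gpdf
        rw [show -(l*c/2)^2/2 = -(c^2/8 * l^2) by ring]
        ring
      have := (tendsto_pow_mul_exp_neg_sq hb8 1).const_mul (c/2/Real.sqrt (2*Real.pi))
      rw [mul_zero] at this
      exact this.congr fun l => (heq l).symm
    have := t1.sub t2
    rw [sub_zero] at this
    exact this.congr fun l => by unfold gfun; ring
  have gneg : ∀ l, s ≤ l → gfun c l < 0 := by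
    intro l hl
    by_contra hcon
    push_neg at hcon
    have h1 : gfun c l < gfun c (l+1) := hmono hl (by simp only [Set.mem_Ici]; linarith) (by linarith)
    have h2 : gfun c (l+1) ≤ 0 := by
      apply ge_of_tendsto gtends
      filter_upwards [eventually_ge_atTop (l+1)] with x hx
      rcases eq_or_lt_of_le hx with hx' | hx'
      · rw [hx']
      · exact (hmono (by simp only [Set.mem_Ici]; linarith) (by simp only [Set.mem_Ici]; linarith) hx').le
    linarith
  have g0 : gfun c 0 = 1 := by
    unfold gfun
    norm_num [Phi_zero]
  have gs : gfun c s < 0 := gneg s le_rfl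
  have hsub := intermediate_value_Icc' hs.le hgcont.continuousOn
  obtain ⟨lhat, hlmem, hlg⟩ := hsub (Set.mem_Icc.mpr ⟨gs.le, by rw [g0]; norm_num⟩)
  obtain ⟨hlm0, hlms⟩ := Set.mem_Icc.mp hlmem
  have hlhat0 : 0 < lhat := by
    rcases eq_or_lt_of_le hlm0 with h' | h'
    · exfalso; rw [← h'] at hlg; rw [g0] at hlg; norm_num at hlg
    · exact h'
  have hlhats : lhat < s := by
    rcases eq_or_lt_of_le hlms with h' | h'
    · exfalso; rw [h'] at hlg; rw [hlg] at gs; norm_num at gs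
    · exact h'
  have gpos : ∀ l, 0 < l → l < lhat → 0 < gfun c l := by
    intro l h0 hl
    have := hanti (Set.mem_Icc.mpr ⟨h0.le, by linarith⟩) hlmem hl
    rw [hlg] at this
    linarith
  have gneg' : ∀ l, lhat < l → gfun c l < 0 := by
    intro l hl
    rcases le_or_gt l s with hls | hls
    · have := hanti hlmem (Set.mem_Icc.mpr ⟨by linarith, hls⟩) hl
      rw [hlg] at this
      linarith
    · exact gneg l hls.le
  refine ⟨lhat, hlhat0, ?_, ?_, ?_, ?_⟩
  · rw [hdef, (hasDerivAt_hfun c lhat).deriv, hlg, mul_zero]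
  · intro l hl0 hdl
    rw [hdef, (hasDerivAt_hfun c l).deriv] at hdl
    have hgl : gfun c l = 0 := by
      rcases mul_eq_zero.mp hdl with h' | h'
      · exfalso; nlinarith
      · exact h'
    rcases lt_trichotomy l lhat with h' | h' | h'
    · exfalso; have := gpos l hl0 h'; linarith
    · exact h'
    · exfalso; have := gneg' l h'; linarith
  · -- IsMaxOn
    have hHdiff : Differentiable ℝ (fun l : ℝ => 2 * l^2 * Phi (-(l*c)/2)) :=
      fun l => (hasDerivAt_hfun c l).differentiableAt
    have hmonoh : MonotoneOn (fun l : ℝ => 2 * l^2 * Phi (-(l*c)/2)) (Set.Icc 0 lhat) := by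
      apply monotoneOn_of_deriv_nonneg (convex_Icc 0 lhat) hHdiff.continuous.continuousOn
        hHdiff.differentiableOn
      intro x hx
      rw [interior_Icc] at hx
      obtain ⟨hx0, hxl⟩ := hx
      rw [(hasDerivAt_hfun c x).deriv]
      have := gpos x hx0 hxl
      positivity
    have hantih : AntitoneOn (fun l : ℝ => 2 * l^2 * Phi (-(l*c)/2)) (Set.Ici lhat) := by
      apply antitoneOn_of_deriv_nonpos (convex_Ici lhat) hHdiff.continuous.continuousOn
        hHdiff.differentiableOn
      intro x hx
      rw [interior_Ici] at hx
      rw [(hasDerivAt_hfun c x).deriv]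
      have h1 := gneg' x hx
      have h2 : 0 < x := hlhat0.trans hx
      nlinarith
    rw [hdef]
    intro x hx
    simp only [Set.mem_Ici] at hx
    simp only [Set.mem_setOf_eq]
    rcases le_total x lhat with hle | hge
    · exact hmonoh (Set.mem_Icc.mpr ⟨hx, hle⟩) (Set.mem_Icc.mpr ⟨hlhat0.le, le_rfl⟩) hle
    · exact hantih (Set.mem_Ici.mpr le_rfl) (Set.mem_Ici.mpr hge) hge
  · show 2 * (2 * Phi (-(lhat*c)/2)) = lhat * c * gpdf (lhat*c/2)
    unfold gfun at hlg
    linear_combination 2*hlg
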